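/- Let C be a coassociative coalgebra over a field k with coproduct Δ : C → C ⊗ C, and let T : C → C be a k-linear coderivation, i.e. (T ⊗ id)∘Δ + (id ⊗ T)∘Δ = Δ∘T, which is locally nilpotent (for every c ∈ C there exists n with Tⁿc = 0). Define Δ(z) : C → (C ⊗ C)[z] by Δ(z) = (e^{zT} ⊗ id)∘Δ, where e^{zT} = Σ_{n≥0} zⁿTⁿ/n!. Then Δ(z) satisfies weak (vertex) coassociativity: (Δ(z) ⊗ id)∘Δ(w) = (id ⊗ Δ(w))∘Δ(z+w) as maps C → C ⊗ C ⊗ C [z,w]. -/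

import Mathlib

open TensorProduct

section aux
variable {k : Type} [Field k] {A B E F : Type}
  [AddCommGroup A] [Module k A] [AddCommGroup B] [Module k B]
  [AddCommGroup E] [Module k E] [AddCommGroup F] [Module k F]

lemma my_sum_comp (s : Finset ℕ) (f : ℕ → (B →ₗ[k] E)) (g : A →ₗ[k] B) :
    (∑ b ∈ s, f b) ∘ₗ g = ∑ b ∈ s, f b ∘ₗ g := by
  ext x; simp [LinearMap.sum_apply]

lemma my_comp_sum (s : Finset ℕ) (f : ℕ → (A →ₗ[k] B)) (g : B →ₗ[k] E) :
    g ∘ₗ (∑ b ∈ s, f b) = ∑ b ∈ s, g ∘ₗ f b := by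
  ext x; simp [LinearMap.sum_apply]

lemma my_map_sum_left (s : Finset ℕ) (f : ℕ → (A →ₗ[k] B)) (g : E →ₗ[k] F) :
    TensorProduct.map (∑ b ∈ s, f b) g = ∑ b ∈ s, TensorProduct.map (f b) g := by
  classical
  induction s using Finset.induction_on with
  | empty => simp [TensorProduct.map_add_left]  -- map 0 g = 0?
  | @insert a s h ih => simp [Finset.sum_insert h, TensorProduct.map_add_left, ih]

end aux

section key
variable {k : Type} [Field k] {C : Type} [AddCommGroup C] [Module k C]
  (Δ : C →ₗ[k] C ⊗[k] C) (T : C →ₗ[k] C)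

lemma my_pow_left (b : ℕ) :
    (TensorProduct.map T (LinearMap.id : C →ₗ[k] C)) ^ b
      = TensorProduct.map (T ^ b) LinearMap.id := by
  induction b with
  | zero => simp [TensorProduct.map_id, Module.End.one_eq_id]
  | succ n ih =>
      rw [pow_succ, pow_succ, ih]
      simp only [Module.End.mul_eq_comp, ← TensorProduct.map_comp, LinearMap.id_comp,
        LinearMap.comp_id]

lemma my_pow_right (b : ℕ) :
    (TensorProduct.map (LinearMap.id : C →ₗ[k] C) T) ^ b
      = TensorProduct.map LinearMap.id (T ^ b) := by
  induction b with
  | zero => simp [TensorProduct.map_id, Module.End.one_eq_id]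
  | succ n ih =>
      rw [pow_succ, pow_succ, ih]
      simp only [Module.End.mul_eq_comp, ← TensorProduct.map_comp, LinearMap.id_comp,
        LinearMap.comp_id]

lemma my_key
    (hcoder : TensorProduct.map T LinearMap.id ∘ₗ Δ + TensorProduct.map LinearMap.id T ∘ₗ Δ
      = Δ ∘ₗ T) (n : ℕ) :
    Δ ∘ₗ (T ^ n) = ∑ b ∈ Finset.range (n + 1),
      (n.choose b : k) • (TensorProduct.map (T ^ b) (T ^ (n - b)) ∘ₗ Δ) := by
  have hcomm : Commute (TensorProduct.map T (LinearMap.id : C →ₗ[k] C))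
      (TensorProduct.map (LinearMap.id : C →ₗ[k] C) T) := by
    show _ * _ = _ * _
    simp only [Module.End.mul_eq_comp, ← TensorProduct.map_comp, LinearMap.id_comp,
      LinearMap.comp_id]
  have hstep : Δ ∘ₗ (T ^ n)
      = ((TensorProduct.map T (LinearMap.id : C →ₗ[k] C)
          + TensorProduct.map (LinearMap.id : C →ₗ[k] C) T) ^ n) ∘ₗ Δ := by
    induction n with
    | zero => simp [Module.End.one_eq_id]
    | succ m ih =>
        rw [pow_succ', Module.End.mul_eq_comp, ← LinearMap.comp_assoc, ← hcoder,
          LinearMap.add_comp, LinearMap.comp_assoc, LinearMap.comp_assoc, ih]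
        conv_rhs => rw [pow_succ', Module.End.mul_eq_comp, LinearMap.comp_assoc,
          LinearMap.add_comp]
  rw [hstep, hcomm.add_pow, my_sum_comp]
  refine Finset.sum_congr rfl fun b _ => ?_
  rw [my_pow_left, my_pow_right, Module.End.mul_eq_comp, Module.End.mul_eq_comp,
    ← TensorProduct.map_comp, LinearMap.id_comp, LinearMap.comp_id]
  have : (TensorProduct.map (T ^ b) (T ^ (n - b)) * (n.choose b : Module.End k (C ⊗[k] C)))
      = (n.choose b : k) • TensorProduct.map (T ^ b) (T ^ (n - b)) := by
    rw [(Nat.cast_commute (n.choose b)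
      (TensorProduct.map (T ^ b) (T ^ (n - b)))).symm.eq, ← nsmul_eq_mul,
      ← Nat.cast_smul_eq_nsmul k]
  rw [Module.End.mul_eq_comp] at this
  rw [this, LinearMap.smul_comp]
end key

section main
variable {k : Type} [Field k] [CharZero k] {C : Type} [AddCommGroup C] [Module k C]
  (Δ : C →ₗ[k] C ⊗[k] C) (T : C →ₗ[k] C)

lemma my_term (b i j : ℕ)
    (hcoassoc : (TensorProduct.assoc k C C C).toLinearMap ∘ₗ
        (TensorProduct.map Δ LinearMap.id) ∘ₗ Δ
      = (TensorProduct.map LinearMap.id Δ) ∘ₗ Δ) :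
    (TensorProduct.assoc k C C C).toLinearMap ∘ₗ
      (TensorProduct.map (TensorProduct.map (T ^ (i+b)) (T ^ (j-b)) ∘ₗ Δ) LinearMap.id ∘ₗ Δ)
    = TensorProduct.map (T ^ (i+b)) (TensorProduct.map (T ^ (j-b)) LinearMap.id ∘ₗ Δ) ∘ₗ Δ := by
  have h1 : TensorProduct.map (TensorProduct.map (T ^ (i+b)) (T ^ (j-b)) ∘ₗ Δ)
      (LinearMap.id : C →ₗ[k] C)
      = TensorProduct.map (TensorProduct.map (T ^ (i+b)) (T ^ (j-b))) LinearMap.id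
        ∘ₗ TensorProduct.map Δ LinearMap.id := by
    rw [← TensorProduct.map_comp, LinearMap.id_comp]
  rw [h1, ← LinearMap.comp_assoc, ← LinearMap.comp_assoc,
    ← TensorProduct.map_map_comp_assoc_eq, LinearMap.comp_assoc, LinearMap.comp_assoc,
    hcoassoc, ← LinearMap.comp_assoc, ← TensorProduct.map_comp, LinearMap.comp_id]

lemma my_core (i j : ℕ)
    (hcoassoc : (TensorProduct.assoc k C C C).toLinearMap ∘ₗ
        (TensorProduct.map Δ LinearMap.id) ∘ₗ Δ
      = (TensorProduct.map LinearMap.id Δ) ∘ₗ Δ)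
    (hcoder : TensorProduct.map T LinearMap.id ∘ₗ Δ + TensorProduct.map LinearMap.id T ∘ₗ Δ
      = Δ ∘ₗ T) :
    (TensorProduct.assoc k C C C).toLinearMap ∘ₗ
      TensorProduct.map (TensorProduct.map (T ^ i) LinearMap.id ∘ₗ Δ) LinearMap.id
        ∘ₗ (TensorProduct.map (T ^ j) LinearMap.id ∘ₗ Δ)
    = ∑ b ∈ Finset.range (j + 1), (j.choose b : k) •
        (TensorProduct.map (T ^ (i + b)) (TensorProduct.map (T ^ (j - b)) LinearMap.id ∘ₗ Δ)
          ∘ₗ Δ) := by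
  have hF : (TensorProduct.map (T ^ i) (LinearMap.id : C →ₗ[k] C) ∘ₗ Δ) ∘ₗ (T ^ j)
      = ∑ b ∈ Finset.range (j + 1), (j.choose b : k) •
          (TensorProduct.map (T ^ (i + b)) (T ^ (j - b)) ∘ₗ Δ) := by
    rw [LinearMap.comp_assoc, my_key Δ T hcoder j, my_comp_sum]
    refine Finset.sum_congr rfl fun b _ => ?_
    rw [LinearMap.comp_smul, ← LinearMap.comp_assoc, ← TensorProduct.map_comp,
      LinearMap.id_comp, ← Module.End.mul_eq_comp, ← pow_add]
  have h2 : TensorProduct.map (TensorProduct.map (T ^ i) LinearMap.id ∘ₗ Δ)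
        (LinearMap.id : C →ₗ[k] C) ∘ₗ (TensorProduct.map (T ^ j) LinearMap.id ∘ₗ Δ)
      = TensorProduct.map ((TensorProduct.map (T ^ i) LinearMap.id ∘ₗ Δ) ∘ₗ (T ^ j))
          LinearMap.id ∘ₗ Δ := by
    rw [← LinearMap.comp_assoc, ← TensorProduct.map_comp, LinearMap.id_comp]
  rw [h2, hF, my_map_sum_left, my_sum_comp, my_comp_sum]
  refine Finset.sum_congr rfl fun b hb => ?_
  rw [TensorProduct.map_smul_left, LinearMap.smul_comp, LinearMap.comp_smul,
    my_term Δ T b i j hcoassoc]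

lemma my_scalar (i j b : ℕ) (hb : b ≤ j) :
    ((j.choose b : k)) * ((i.factorial : k)⁻¹ * (j.factorial : k)⁻¹)
      = ((i + b).choose i : k) * (((j - b).factorial : k)⁻¹ * ((i + b).factorial : k)⁻¹) := by
  have h1 := Nat.choose_mul_factorial_mul_factorial hb
  have h2 := Nat.choose_mul_factorial_mul_factorial (Nat.le_add_right i b)
  rw [Nat.add_sub_cancel_left] at h2
  have c1 : (j.choose b : k) * (b.factorial : k) * ((j - b).factorial : k)
      = (j.factorial : k) := by exact_mod_cast congrArg (Nat.cast : ℕ → k) h1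
  have c2 : ((i + b).choose i : k) * (i.factorial : k) * (b.factorial : k)
      = ((i + b).factorial : k) := by exact_mod_cast congrArg (Nat.cast : ℕ → k) h2
  have hNat : j.choose b * ((j - b).factorial * (i + b).factorial)
      = (i + b).choose i * (i.factorial * j.factorial) := by
    apply Nat.eq_of_mul_eq_mul_right (Nat.factorial_pos b)
    calc j.choose b * ((j - b).factorial * (i + b).factorial) * b.factorial
        = (j.choose b * b.factorial * (j - b).factorial) * (i + b).factorial := by ring
      _ = j.factorial * (i + b).factorial := by rw [h1]
      _ = ((i + b).choose i * i.factorial * b.factorial) * j.factorial := by rw [h2]; ring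
      _ = (i + b).choose i * (i.factorial * j.factorial) * b.factorial := by ring
  have ck : ((j.choose b : k)) * (((j - b).factorial : k) * ((i + b).factorial : k))
      = ((i + b).choose i : k) * ((i.factorial : k) * (j.factorial : k)) := by
    exact_mod_cast congrArg (Nat.cast : ℕ → k) hNat
  have fi : (i.factorial : k) ≠ 0 := Nat.cast_ne_zero.mpr (Nat.factorial_pos i).ne'
  have fj : (j.factorial : k) ≠ 0 := Nat.cast_ne_zero.mpr (Nat.factorial_pos j).ne'
  have fjb : ((j - b).factorial : k) ≠ 0 := Nat.cast_ne_zero.mpr (Nat.factorial_pos _).ne'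
  have fib : ((i + b).factorial : k) ≠ 0 := Nat.cast_ne_zero.mpr (Nat.factorial_pos _).ne'
  field_simp
  linear_combination ck
end main

/-- For a coassociative coalgebra `C` over a field `k` of characteristic zero
with a locally nilpotent coderivation `T`, the cofield map `Δ(z) = (e^{zT} ⊗ id)∘Δ` satisfies
weak (vertex) coassociativity `(Δ(z) ⊗ id)∘Δ(w) = (id ⊗ Δ(w))∘Δ(z+w)`.
This is stated coefficientwise in the commuting formal variables `z, w`: writing
`Δ(z) = Σ_n zⁿ Dₙ` with `Dₙ = ((Tⁿ/n!) ⊗ id)∘Δ`, the coefficient of `zⁱ wʲ` on both sides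
agree. -/
theorem vertex_weak_coassociativity
    (k : Type) [Field k] [CharZero k]
    (C : Type) [AddCommGroup C] [Module k C]
    (Δ : C →ₗ[k] C ⊗[k] C)
    (hcoassoc : (TensorProduct.assoc k C C C).toLinearMap ∘ₗ
        (TensorProduct.map Δ LinearMap.id) ∘ₗ Δ
      = (TensorProduct.map LinearMap.id Δ) ∘ₗ Δ)
    (T : C →ₗ[k] C)
    (hcoder : TensorProduct.map T LinearMap.id ∘ₗ Δ + TensorProduct.map LinearMap.id T ∘ₗ Δ
      = Δ ∘ₗ T)
    (hnil : ∀ c : C, ∃ n : ℕ, (T ^ n) c = 0)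
    (D : ℕ → (C →ₗ[k] C ⊗[k] C))
    (hD : ∀ n : ℕ,
      D n = ((n.factorial : k)⁻¹) • (TensorProduct.map (T ^ n) LinearMap.id ∘ₗ Δ)) :
    ∀ i j : ℕ,
      (TensorProduct.assoc k C C C).toLinearMap ∘ₗ
          TensorProduct.map (D i) LinearMap.id ∘ₗ D j
        = ∑ b ∈ Finset.range (j + 1),
            (((i + b).choose i : k)) •
              (TensorProduct.map LinearMap.id (D (j - b)) ∘ₗ D (i + b)) := by
  intro i j
  simp only [hD, TensorProduct.map_smul_left, TensorProduct.map_smul_right,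
    LinearMap.smul_comp, LinearMap.comp_smul, smul_smul]
  rw [my_core Δ T i j hcoassoc hcoder, Finset.smul_sum]
  refine Finset.sum_congr rfl fun b hb => ?_
  have h3 : TensorProduct.map (LinearMap.id : C →ₗ[k] C)
        (TensorProduct.map (T ^ (j - b)) LinearMap.id ∘ₗ Δ)
        ∘ₗ (TensorProduct.map (T ^ (i + b)) LinearMap.id ∘ₗ Δ)
      = TensorProduct.map (T ^ (i + b))
          (TensorProduct.map (T ^ (j - b)) LinearMap.id ∘ₗ Δ) ∘ₗ Δ := by
    rw [← LinearMap.comp_assoc, ← TensorProduct.map_comp, LinearMap.id_comp,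
      LinearMap.comp_id]
  rw [h3, smul_smul]
  congr 1
  have hs := my_scalar (k := k) i j b (Nat.lt_succ_iff.mp (Finset.mem_range.mp hb))
  linear_combination hs
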